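/- Let k, t, d, g be positive integers with k = g·t and d ≥ k, and let α, β ≥ 0. Among all sequences u = (u_0,…,u_{g'-1}) of positive integers with each u_i ≤ t and Σ u_i = k, the quantity Σ_{i=0}^{g'-1} min(u_i·α, (d - Σ_{j<i} u_j)·β) is minimized by the sequence u = (t, t, …, t) of length g. -/

import Mathlib

open Finset

private lemma rank_sum (φ : ℕ → ℝ) :
    ∀ (n : ℕ) (C : Finset ℕ) (w : ℕ → ℝ), C.card = n →
      (∀ i ∈ C, φ ((C.filter (· < i)).card) ≤ w i) →
      ∑ j ∈ Finset.range n, φ j ≤ ∑ i ∈ C, w i := by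
  intro n
  induction n with
  | zero =>
      intro C w hcard _
      have : C = ∅ := Finset.card_eq_zero.mp hcard
      simp [this]
  | succ n ih =>
      intro C w hcard hw
      have hne : C.Nonempty := Finset.card_pos.mp (by omega)
      have hMmem : C.max' hne ∈ C := C.max'_mem hne
      set M := C.max' hne with hMdef
      have hcard' : (C.erase M).card = n := by
        rw [Finset.card_erase_of_mem hMmem, hcard]; omega
      have hfilM : C.filter (· < M) = C.erase M := by
        ext x
        simp only [Finset.mem_filter, Finset.mem_erase]
        constructor
        · rintro ⟨hx, hlt⟩; exact ⟨by omega, hx⟩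
        · rintro ⟨hne', hx⟩
          refine ⟨hx, ?_⟩
          have := C.le_max' x hx
          omega
      have hstep : ∀ i ∈ C.erase M, φ (((C.erase M).filter (· < i)).card) ≤ w i := by
        intro i hi
        have hiC : i ∈ C := Finset.mem_of_mem_erase hi
        have heq : (C.erase M).filter (· < i) = C.filter (· < i) := by
          ext x
          simp only [Finset.mem_filter, Finset.mem_erase]
          constructor
          · rintro ⟨⟨_, hx⟩, h2⟩; exact ⟨hx, h2⟩
          · rintro ⟨hx, h2⟩
            have hiM : i ≤ M := C.le_max' i hiC
            exact ⟨⟨by omega, hx⟩, h2⟩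
        rw [heq]; exact hw i hiC
      have h1 : ∑ j ∈ Finset.range n, φ j ≤ ∑ i ∈ C.erase M, w i :=
        ih (C.erase M) w hcard' hstep
      have h2 : φ n ≤ w M := by
        have hcc : ((C.filter (· < M)).card) = n := by rw [hfilM, hcard']
        rw [← hcc]; exact hw M hMmem
      calc ∑ j ∈ Finset.range (n+1), φ j = ∑ j ∈ Finset.range n, φ j + φ n :=
            Finset.sum_range_succ φ n
        _ ≤ ∑ i ∈ C.erase M, w i + w M := add_le_add h1 h2
        _ = ∑ i ∈ C, w i := Finset.sum_erase_add C w hMmem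




private lemma key_lemma (t : ℕ) (ht : 1 ≤ t) (α β : ℝ) (hα : 0 ≤ α) (hβ : 0 ≤ β) :
    ∀ (g p r : ℕ) (D : ℝ), r < t → p * t + r ≤ g * t → ((g * t : ℕ) : ℝ) ≤ D →
      ∑ i ∈ Finset.range g, min ((t : ℝ) * α) ((D - (i : ℝ) * (t : ℝ)) * β)
        ≤ ((p * t + r : ℕ) : ℝ) * α +
          ∑ j ∈ Finset.range (g - p), (D - ((p * t + r : ℕ) : ℝ) - (j : ℝ) * (t : ℝ)) * β := by
  intro g
  induction g with
  | zero =>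
      intro p r D hr hle hD
      have h0 : p * t + r = 0 := by simpa using hle
      have hp : p = 0 := by
        rcases Nat.mul_eq_zero.mp (by omega : p * t = 0) with h | h
        · exact h
        · omega
      subst hp
      simp_all
  | succ g ih =>
      intro p r D hr hle hD
      have hT : (0 : ℝ) < (t : ℝ) := by exact_mod_cast ht
      match p with
      | p + 1 =>
        -- peel the first term, use IH with (p, r, D - t)
        have hle' : p * t + r ≤ g * t := by
          have h3 : p * t + r + t ≤ g * t + t := by
            calc p * t + r + t = (p + 1) * t + r := by ring
              _ ≤ (g + 1) * t := hle
              _ = g * t + t := by ring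
          omega
        have hD' : ((g * t : ℕ) : ℝ) ≤ D - t := by
          have : ((g : ℝ) + 1) * (t : ℝ) ≤ D := by push_cast at hD; push_cast; linarith
          push_cast
          nlinarith
        have hih := ih p r (D - (t : ℝ)) hr hle' hD'
        have epeel : ∑ i ∈ Finset.range (g + 1), min ((t : ℝ) * α) ((D - (i : ℝ) * (t : ℝ)) * β)
            = (∑ i ∈ Finset.range g, min ((t : ℝ) * α) ((D - ((i : ℝ) + 1) * (t : ℝ)) * β))
              + min ((t : ℝ) * α) (D * β) := by
          rw [Finset.sum_range_succ' (fun i => min ((t : ℝ) * α) ((D - (i : ℝ) * (t : ℝ)) * β)) g]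
          simp only [Nat.cast_add, Nat.cast_one, Nat.cast_zero]
          norm_num
        have esum1 : ∑ i ∈ Finset.range g, min ((t : ℝ) * α) ((D - ((i : ℝ) + 1) * (t : ℝ)) * β)
            = ∑ i ∈ Finset.range g, min ((t : ℝ) * α) ((D - (t : ℝ) - (i : ℝ) * (t : ℝ)) * β) := by
          refine Finset.sum_congr rfl fun i _ => ?_
          ring_nf
        have esum2 : ∑ j ∈ Finset.range (g - p), (D - (t:ℝ) - ((p * t + r : ℕ) : ℝ) - (j : ℝ) * (t : ℝ)) * β
            = ∑ j ∈ Finset.range (g + 1 - (p + 1)), (D - (((p+1) * t + r : ℕ) : ℝ) - (j : ℝ) * (t : ℝ)) * β := by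
          have : g + 1 - (p + 1) = g - p := by omega
          rw [this]
          refine Finset.sum_congr rfl fun j _ => ?_
          push_cast
          ring_nf
        have hmin : min ((t : ℝ) * α) (D * β) ≤ (t : ℝ) * α := min_le_left _ _
        have hcast : (((p+1) * t + r : ℕ) : ℝ) * α = ((p * t + r : ℕ) : ℝ) * α + (t : ℝ) * α := by
          push_cast; ring
        rw [epeel, esum1]
        rw [← esum2] at *
        linarith [hih]
      | 0 =>
        -- p = 0, a = r < t : direct argument
        simp only [Nat.zero_mul, Nat.zero_add, Nat.sub_zero] at *
        have hD2 : ((g : ℝ) + 1) * (t : ℝ) ≤ D := by push_cast at hD; linarith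
        have hrT : (r : ℝ) < (t : ℝ) := by exact_mod_cast hr
        have hr0 : (0 : ℝ) ≤ (r : ℝ) := Nat.cast_nonneg r
        set m := min ((t : ℝ) * α) (D * β) with hm
        have epeel : ∑ i ∈ Finset.range (g + 1), min ((t : ℝ) * α) ((D - (i : ℝ) * (t : ℝ)) * β)
            = (∑ i ∈ Finset.range g, min ((t : ℝ) * α) ((D - ((i : ℝ) + 1) * (t : ℝ)) * β)) + m := by
          rw [Finset.sum_range_succ' (fun i => min ((t : ℝ) * α) ((D - (i : ℝ) * (t : ℝ)) * β)) g]
          simp only [Nat.cast_add, Nat.cast_one, Nat.cast_zero]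
          norm_num
          exact hm.symm
        have epeel2 : ∑ j ∈ Finset.range (g + 1), (D - (r : ℝ) - (j : ℝ) * (t : ℝ)) * β
            = (∑ j ∈ Finset.range g, (D - (r : ℝ) - (j : ℝ) * (t : ℝ)) * β)
              + (D - (r : ℝ) - (g : ℝ) * (t : ℝ)) * β :=
          Finset.sum_range_succ _ g
        have hterm : ∑ i ∈ Finset.range g, min ((t : ℝ) * α) ((D - ((i : ℝ) + 1) * (t : ℝ)) * β)
            ≤ ∑ i ∈ Finset.range g, (D - ((i : ℝ) + 1) * (t : ℝ)) * β :=
          Finset.sum_le_sum fun i _ => min_le_right _ _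
        have hshift : ∑ j ∈ Finset.range g, (D - (r : ℝ) - (j : ℝ) * (t : ℝ)) * β
            = (∑ i ∈ Finset.range g, (D - ((i : ℝ) + 1) * (t : ℝ)) * β)
              + (g : ℝ) * (((t : ℝ) - (r : ℝ)) * β) := by
          have : ∀ j ∈ Finset.range g, (D - (r : ℝ) - (j : ℝ) * (t : ℝ)) * β
              = (D - ((j : ℝ) + 1) * (t : ℝ)) * β + ((t : ℝ) - (r : ℝ)) * β := by
            intro j _; ring
          rw [Finset.sum_congr rfl this, Finset.sum_add_distrib, Finset.sum_const,
            Finset.card_range, nsmul_eq_mul]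
        -- main convexity inequality for the first term
        have hmain : m ≤ (r : ℝ) * α + (g : ℝ) * (((t : ℝ) - (r : ℝ)) * β)
            + (D - (r : ℝ) - (g : ℝ) * (t : ℝ)) * β := by
          have hm1 : (0 : ℝ) ≤ (r : ℝ) * ((t : ℝ) * α - m) :=
            mul_nonneg hr0 (by simp [hm, min_le_left])
          have hm2 : (0 : ℝ) ≤ ((t : ℝ) - (r : ℝ)) * (D * β - m) :=
            mul_nonneg (by linarith) (by simp [hm, min_le_right])
          have hm3 : (0 : ℝ) ≤ (r : ℝ) * β * (D - ((g : ℝ) + 1) * (t : ℝ)) :=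
            mul_nonneg (mul_nonneg hr0 hβ) (by linarith)
          have hident : (t : ℝ) * ((r : ℝ) * α + (g : ℝ) * (((t : ℝ) - (r : ℝ)) * β)
              + (D - (r : ℝ) - (g : ℝ) * (t : ℝ)) * β - m)
              = (r : ℝ) * ((t : ℝ) * α - m) + ((t : ℝ) - (r : ℝ)) * (D * β - m)
                + (r : ℝ) * β * (D - ((g : ℝ) + 1) * (t : ℝ)) := by ring
          nlinarith
        rw [epeel, epeel2]
        linarith

/-- Among all recovery scenarios `u` (compositions of `k` with parts in `[1,t]`),
the concurrent-repair cut-set quantity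
`∑ᵢ min(uᵢ α, (d - ∑_{j<i} uⱼ) β)` is minimized by the uniform sequence
`u = (t,…,t)` of length `g = k/t`. -/
theorem stmt_2 (k t d g : ℕ) (hk : 1 ≤ k) (ht : 1 ≤ t) (hg : 1 ≤ g)
    (hkgt : k = g * t) (hdk : k ≤ d) (α β : ℝ) (hα : 0 ≤ α) (hβ : 0 ≤ β)
    (g' : ℕ) (u : ℕ → ℕ)
    (hu : ∀ i < g', 1 ≤ u i ∧ u i ≤ t)
    (hsum : ∑ i ∈ Finset.range g', u i = k) :
    (∑ i ∈ Finset.range g,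
        min ((t : ℝ) * α) (((d : ℝ) - i * t) * β)) ≤
      ∑ i ∈ Finset.range g',
        min ((u i : ℝ) * α)
          (((d : ℝ) - ∑ j ∈ Finset.range i, (u j : ℝ)) * β) := by
  classical
  set S : ℕ → ℝ := fun i => ∑ j ∈ Finset.range i, (u j : ℝ) with hSdef
  set pred : ℕ → Prop := fun i => (u i : ℝ) * α ≤ ((d : ℝ) - S i) * β with hpreddef
  set T : Finset ℕ := (Finset.range g').filter pred with hTdef
  set C : Finset ℕ := (Finset.range g').filter (fun i => ¬ pred i) with hCdef
  set a : ℕ := ∑ i ∈ T, u i with hadef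
  set p : ℕ := a / t with hpdef
  set r : ℕ := a % t with hrdef
  have htpos : 0 < t := ht
  have hpr : p * t + r = a := Nat.div_add_mod' a t
  have hr : r < t := Nat.mod_lt a htpos
  -- split total
  have hsplit : a + ∑ i ∈ C, u i = k := by
    rw [hadef, hTdef, hCdef, ← hsum]
    exact Finset.sum_filter_add_sum_filter_not _ _ _
  have hak : a ≤ k := by omega
  -- S i bounds
  have hSk : ∀ i, i ≤ g' → S i ≤ (k : ℝ) := by
    intro i hi
    have : (∑ j ∈ Finset.range i, (u j : ℝ)) ≤ ∑ j ∈ Finset.range g', (u j : ℝ) :=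
      Finset.sum_le_sum_of_subset_of_nonneg
        (Finset.range_subset_range.mpr hi) (fun j _ _ => Nat.cast_nonneg _)
    rw [hSdef]
    simpa [← Nat.cast_sum, hsum] using this
  -- cardinality bound for C
  have hCu : ∑ i ∈ C, u i ≤ C.card * t := by
    calc ∑ i ∈ C, u i ≤ ∑ _i ∈ C, t :=
          Finset.sum_le_sum (fun i hi => by
            have : i ∈ Finset.range g' := Finset.mem_of_mem_filter i hi
            exact (hu i (Finset.mem_range.mp this)).2)
      _ = C.card * t := by rw [Finset.sum_const, smul_eq_mul]
  have hCcard : g - p ≤ C.card := by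
    have h1 : g * t < (p + 1 + C.card) * t := by
      calc g * t = k := hkgt.symm
        _ = a + ∑ i ∈ C, u i := hsplit.symm
        _ ≤ (p * t + r) + C.card * t := add_le_add (le_of_eq hpr.symm) hCu
        _ < (p * t + t) + C.card * t := by
            exact Nat.add_lt_add_right (Nat.add_lt_add_left hr _) _
        _ = (p + 1 + C.card) * t := by ring
    have h2 : g < p + 1 + C.card := Nat.lt_of_mul_lt_mul_right h1
    omega
  -- rewrite RHS
  have hRHS : ∑ i ∈ Finset.range g', min ((u i : ℝ) * α) (((d : ℝ) - S i) * β)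
      = (∑ i ∈ T, (u i : ℝ) * α) + ∑ i ∈ C, ((d : ℝ) - S i) * β := by
    rw [← Finset.sum_filter_add_sum_filter_not (Finset.range g') pred
      (fun i => min ((u i : ℝ) * α) (((d : ℝ) - S i) * β))]
    congr 1
    · exact Finset.sum_congr rfl (fun i hi => min_eq_left (Finset.mem_filter.mp hi).2)
    · exact Finset.sum_congr rfl (fun i hi =>
        min_eq_right (le_of_not_ge (Finset.mem_filter.mp hi).2))
  have hTa : (∑ i ∈ T, (u i : ℝ) * α) = (a : ℝ) * α := by
    rw [← Finset.sum_mul, hadef]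
    push_cast
    ring
  -- lower bound on β-branch via rank_sum
  have hrank : ∑ j ∈ Finset.range C.card, (max 0 ((d : ℝ) - (a : ℝ) - (j : ℝ) * (t : ℝ))) * β
      ≤ ∑ i ∈ C, ((d : ℝ) - S i) * β := by
    apply rank_sum (fun j => (max 0 ((d : ℝ) - (a : ℝ) - (j : ℝ) * (t : ℝ))) * β) C.card C _ rfl
    intro i hi
    have hig' : i < g' := Finset.mem_range.mp (Finset.mem_of_mem_filter i hi)
    -- S i ≤ a + t * rank
    have hcardeq : ((Finset.range i).filter (fun j => ¬ pred j)).card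
        = (C.filter (· < i)).card := by
      congr 1
      ext x
      simp only [Finset.mem_filter, Finset.mem_range, hCdef]
      constructor
      · rintro ⟨hx, h2⟩; exact ⟨⟨by omega, h2⟩, hx⟩
      · rintro ⟨⟨_, h2⟩, hx⟩; exact ⟨hx, h2⟩
    have hSbound : S i ≤ (a : ℝ) + ((C.filter (· < i)).card : ℝ) * (t : ℝ) := by
      have hsplit2 : S i = (∑ j ∈ (Finset.range i).filter pred, (u j : ℝ))
          + ∑ j ∈ (Finset.range i).filter (fun j => ¬ pred j), (u j : ℝ) :=
        (Finset.sum_filter_add_sum_filter_not _ _ _).symm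
      have h1 : (∑ j ∈ (Finset.range i).filter pred, (u j : ℝ)) ≤ (a : ℝ) := by
        have hsub : (Finset.range i).filter pred ⊆ T := by
          rw [hTdef]
          exact Finset.filter_subset_filter pred (Finset.range_subset_range.mpr (le_of_lt hig'))
        calc (∑ j ∈ (Finset.range i).filter pred, (u j : ℝ))
            ≤ ∑ j ∈ T, (u j : ℝ) :=
              Finset.sum_le_sum_of_subset_of_nonneg hsub (fun j _ _ => Nat.cast_nonneg _)
          _ = (a : ℝ) := by rw [hadef]; push_cast; ring
      have h2 : (∑ j ∈ (Finset.range i).filter (fun j => ¬ pred j), (u j : ℝ))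
          ≤ ((C.filter (· < i)).card : ℝ) * (t : ℝ) := by
        rw [← hcardeq]
        calc (∑ j ∈ (Finset.range i).filter (fun j => ¬ pred j), (u j : ℝ))
            ≤ ∑ j ∈ (Finset.range i).filter (fun j => ¬ pred j), (t : ℝ) := by
              refine Finset.sum_le_sum (fun j hj => ?_)
              have hji : j < i := Finset.mem_range.mp (Finset.mem_of_mem_filter j hj)
              exact_mod_cast (hu j (by omega)).2
          _ = _ := by rw [Finset.sum_const, nsmul_eq_mul]
      linarith
    have hS0 : S i ≤ (d : ℝ) := le_trans (hSk i (le_of_lt hig')) (Nat.cast_le.mpr hdk)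
    apply mul_le_mul_of_nonneg_right _ hβ
    apply max_le
    · linarith
    · linarith
  -- amalgamate: range (g-p) ⊆ range C.card, terms nonneg
  have hsub2 : ∑ j ∈ Finset.range (g - p), (max 0 ((d : ℝ) - (a : ℝ) - (j : ℝ) * (t : ℝ))) * β
      ≤ ∑ j ∈ Finset.range C.card, (max 0 ((d : ℝ) - (a : ℝ) - (j : ℝ) * (t : ℝ))) * β :=
    Finset.sum_le_sum_of_subset_of_nonneg (Finset.range_subset_range.mpr hCcard)
      (fun j _ _ => mul_nonneg (le_max_left _ _) hβ)
  have hdropmax : ∑ j ∈ Finset.range (g - p), ((d : ℝ) - (a : ℝ) - (j : ℝ) * (t : ℝ)) * β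
      ≤ ∑ j ∈ Finset.range (g - p), (max 0 ((d : ℝ) - (a : ℝ) - (j : ℝ) * (t : ℝ))) * β :=
    Finset.sum_le_sum (fun j _ => mul_le_mul_of_nonneg_right (le_max_right _ _) hβ)
  -- key lemma
  have hkey := key_lemma t ht α β hα hβ g p r (d : ℝ) hr
    (by rw [hpr, ← hkgt]; exact hak)
    (by rw [← hkgt]; exact_mod_cast hdk)
  have hcasta : ((p * t + r : ℕ) : ℝ) = (a : ℝ) := by
    exact_mod_cast hpr
  rw [hcasta] at hkey
  have hsamesum : ∑ j ∈ Finset.range (g - p), ((d : ℝ) - (a : ℝ) - (j : ℝ) * (t : ℝ)) * β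
      = ∑ j ∈ Finset.range (g - p), ((d : ℝ) - ((a : ℕ) : ℝ) - (j : ℝ) * (t : ℝ)) * β := rfl
  calc (∑ i ∈ Finset.range g, min ((t : ℝ) * α) (((d : ℝ) - i * t) * β))
      ≤ (a : ℝ) * α + ∑ j ∈ Finset.range (g - p), ((d : ℝ) - (a : ℝ) - (j : ℝ) * (t : ℝ)) * β := hkey
    _ ≤ (a : ℝ) * α + ∑ i ∈ C, ((d : ℝ) - S i) * β := by
        have := le_trans hdropmax (le_trans hsub2 hrank)
        linarith
    _ = (∑ i ∈ T, (u i : ℝ) * α) + ∑ i ∈ C, ((d : ℝ) - S i) * β := by rw [hTa]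
    _ = ∑ i ∈ Finset.range g', min ((u i : ℝ) * α) (((d : ℝ) - S i) * β) := hRHS.symm
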